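/- (Unconditional energy dissipation for scheme S2.) Let N ≥ 2, Δx > 0, Δt > 0, let H : ℝ → ℝ be convex and differentiable, V ∈ ℝᴺ, and let K ∈ ℝ^{N×N} be given by K_{ik} = w(i−k) for an even function w : ℤ → ℝ. Suppose ρⁿ, ρⁿ⁺¹, ρ** ∈ ℝᴺ satisfy the S2 scheme: ξ_i = H'(ρⁿ⁺¹_i) + V_i + Δx·∑_{k=1}^{N} K_{ik}ρ**_k; u_{i+1/2} = −(ξ_{i+1} − ξ_i)/Δx for i = 1,…,N−1; F_{i+1/2} = ρⁿ⁺¹_i·u_{i+1/2}⁺ + ρⁿ⁺¹_{i+1}·u_{i+1/2}⁻; F_{1/2} = F_{N+1/2} = 0; and ρⁿ⁺¹_i = ρⁿ_i − (Δt/Δx)(F_{i+1/2} − F_{i−1/2}) for all i. Assume ρⁿ_i ≥ 0 for all i. If one of the following holds: (i) ρ** = (ρⁿ + ρⁿ⁺¹)/2; (ii) ρ** = ρⁿ and K is negative definite; (iii) ρ** = ρⁿ⁺¹ and K is positive definite; then E_Δ(ρⁿ⁺¹) ≤ E_Δ(ρⁿ), with no CFL restriction on Δt. -/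

import Mathlib

/-- Positive part `z⁺ = max(z,0)`. -/
noncomputable def pospart (z : ℝ) : ℝ := max z 0

/-- Negative part `z⁻ = min(z,0)`. -/
noncomputable def negpart (z : ℝ) : ℝ := min z 0

/-- The discrete free energy
`E_Δ(ρ) = Δx·(∑ H(ρ_i) + ∑ V_i ρ_i + (Δx/2)·∑_{i,k} K_{ik} ρ_i ρ_k)`. -/
noncomputable def Edisc (N : ℕ) (dx : ℝ) (H : ℝ → ℝ) (V : ℕ → ℝ) (K : ℕ → ℕ → ℝ)
    (ρ : ℕ → ℝ) : ℝ :=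
  dx * ((∑ i ∈ Finset.Icc 1 N, H (ρ i)) + (∑ i ∈ Finset.Icc 1 N, V i * ρ i)
    + dx / 2 * ∑ i ∈ Finset.Icc 1 N, ∑ k ∈ Finset.Icc 1 N, K i k * ρ i * ρ k)

/-- The kernel `K` is negative definite: `∑_{i,k} K_{ik}(a_i−b_i)(a_k−b_k) ≤ 0`
for all vectors `a, b` with nonnegative entries. -/
def NegDefKer (N : ℕ) (K : ℕ → ℕ → ℝ) : Prop :=
  ∀ a b : ℕ → ℝ, (∀ i, 1 ≤ i → i ≤ N → 0 ≤ a i) → (∀ i, 1 ≤ i → i ≤ N → 0 ≤ b i) →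
    ∑ i ∈ Finset.Icc 1 N, ∑ k ∈ Finset.Icc 1 N, K i k * (a i - b i) * (a k - b k) ≤ 0

/-- The kernel `K` is positive definite: `∑_{i,k} K_{ik}(a_i−b_i)(a_k−b_k) ≥ 0`
for all vectors `a, b` with nonnegative entries. -/
def PosDefKer (N : ℕ) (K : ℕ → ℕ → ℝ) : Prop :=
  ∀ a b : ℕ → ℝ, (∀ i, 1 ≤ i → i ≤ N → 0 ≤ a i) → (∀ i, 1 ≤ i → i ≤ N → 0 ≤ b i) →
    0 ≤ ∑ i ∈ Finset.Icc 1 N, ∑ k ∈ Finset.Icc 1 N, K i k * (a i - b i) * (a k - b k)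

/- ### Auxiliary lemmas -/

/-- Tangent line inequality for a differentiable convex function. -/
lemma tangent_aux (H : ℝ → ℝ) (hc : ConvexOn ℝ Set.univ H) (hd : Differentiable ℝ H)
    (x y : ℝ) : H x - H y ≤ deriv H x * (x - y) := by
  rcases lt_trichotomy x y with h | h | h
  · have h1 := hc.deriv_le_slope (Set.mem_univ x) (Set.mem_univ y) h (hd x)
    rw [slope_def_field, le_div_iff₀ (by linarith)] at h1
    nlinarith
  · simp [h]
  · have h1 := hc.slope_le_deriv (Set.mem_univ y) (Set.mem_univ x) h (hd x)
    rw [slope_def_field, div_le_iff₀ (by linarith)] at h1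
    nlinarith

lemma shift_sum (N : ℕ) (hN : 1 ≤ N) (f : ℕ → ℝ) :
    ∑ i ∈ Finset.Icc 1 N, f (i - 1) = ∑ j ∈ Finset.Icc 0 (N-1), f j := by
  rw [show Finset.Icc 1 N = Finset.map ⟨fun j => j + 1, add_left_injective 1⟩
      (Finset.Icc 0 (N-1)) by
    ext x; simp only [Finset.mem_map, Finset.mem_Icc, Function.Embedding.coeFn_mk]
    constructor
    · rintro ⟨h1, h2⟩; exact ⟨x - 1, by omega, by omega⟩
    · rintro ⟨a, ⟨h1, h2⟩, rfl⟩; exact ⟨by omega, by omega⟩, Finset.sum_map]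
  simp

/-- Summation by parts with vanishing boundary fluxes. -/
lemma sbp (N : ℕ) (hN : 1 ≤ N) (F g : ℕ → ℝ) (hF0 : F 0 = 0) (hFN : F N = 0) :
    ∑ i ∈ Finset.Icc 1 N, g i * (F i - F (i-1))
      = ∑ i ∈ Finset.Icc 1 (N-1), (g i - g (i+1)) * F i := by
  have e1 : ∑ i ∈ Finset.Icc 1 N, g i * (F i - F (i-1))
      = ∑ i ∈ Finset.Icc 1 N, g i * F i - ∑ i ∈ Finset.Icc 1 N, g i * F (i-1) := by
    rw [← Finset.sum_sub_distrib]
    exact Finset.sum_congr rfl fun i _ => by ring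
  have e2 : ∑ i ∈ Finset.Icc 1 N, g i * F (i-1)
      = ∑ j ∈ Finset.Icc 0 (N-1), g (j+1) * F j := by
    rw [← shift_sum N hN (fun j => g (j+1) * F j)]
    exact Finset.sum_congr rfl fun i hi => by
      simp only [Finset.mem_Icc] at hi
      have : i - 1 + 1 = i := by omega
      simp only [this]
  have e3 : ∑ j ∈ Finset.Icc 0 (N-1), g (j+1) * F j
      = g 1 * F 0 + ∑ j ∈ Finset.Icc 1 (N-1), g (j+1) * F j := by
    rw [show Finset.Icc 0 (N-1) = insert 0 (Finset.Icc 1 (N-1)) by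
        ext x; simp only [Finset.mem_insert, Finset.mem_Icc]; omega,
      Finset.sum_insert (by simp)]
  have e4 : ∑ i ∈ Finset.Icc 1 N, g i * F i
      = ∑ i ∈ Finset.Icc 1 (N-1), g i * F i + g N * F N := by
    rw [show Finset.Icc 1 N = Finset.Icc 1 ((N-1)+1) by rw [Nat.sub_add_cancel hN],
      Finset.sum_Icc_succ_top (by omega), Nat.sub_add_cancel hN]
  have e5 : ∑ i ∈ Finset.Icc 1 (N-1), (g i - g (i+1)) * F i
      = ∑ i ∈ Finset.Icc 1 (N-1), g i * F i - ∑ i ∈ Finset.Icc 1 (N-1), g (i+1) * F i := by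
    rw [← Finset.sum_sub_distrib]
    exact Finset.sum_congr rfl fun i _ => by ring
  rw [e1, e2, e3, e4, hF0, hFN, e5]
  ring

/-- Unconditional positivity of the implicit upwind update. -/
lemma positivity_step (N : ℕ) (hN : 2 ≤ N) (dx dt : ℝ) (hdx : 0 < dx) (hdt : 0 < dt)
    (u F ρn ρn1 : ℕ → ℝ)
    (hF : ∀ i, 1 ≤ i → i ≤ N - 1 →
      F i = ρn1 i * pospart (u i) + ρn1 (i + 1) * negpart (u i))
    (hF0 : F 0 = 0) (hFN : F N = 0)
    (hupd : ∀ i, 1 ≤ i → i ≤ N → ρn1 i = ρn i - dt / dx * (F i - F (i - 1)))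
    (hpos : ∀ i, 1 ≤ i → i ≤ N → 0 ≤ ρn i) :
    ∀ i, 1 ≤ i → i ≤ N → 0 ≤ ρn1 i := by
  have hlam0 : 0 < dt / dx := div_pos hdt hdx
  set g : ℕ → ℝ := fun i => if ρn1 i < 0 then 1 else 0 with hg
  have hT : ∑ i ∈ Finset.Icc 1 (N-1), (g i - g (i+1)) * F i ≤ 0 := by
    apply Finset.sum_nonpos
    intro i hi
    simp only [Finset.mem_Icc] at hi
    rw [hF i hi.1 hi.2]
    have hu1 : 0 ≤ pospart (u i) := le_max_right _ _
    have hu2 : negpart (u i) ≤ 0 := min_le_right _ _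
    by_cases h1 : ρn1 i < 0 <;> by_cases h2 : ρn1 (i+1) < 0 <;>
      simp only [hg, h1, h2, if_true, if_false]
    · nlinarith
    · have t1 : ρn1 i * pospart (u i) ≤ 0 := mul_nonpos_iff.2 (Or.inr ⟨h1.le, hu1⟩)
      have t2 : ρn1 (i+1) * negpart (u i) ≤ 0 :=
        mul_nonpos_iff.2 (Or.inl ⟨not_lt.1 h2, hu2⟩)
      nlinarith
    · have t1 : 0 ≤ ρn1 i * pospart (u i) := mul_nonneg (not_lt.1 h1) hu1
      have t2 : 0 ≤ ρn1 (i+1) * negpart (u i) :=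
        mul_nonneg_iff.2 (Or.inr ⟨h2.le, hu2⟩)
      nlinarith
    · nlinarith
  have sum_eq : ∑ i ∈ Finset.Icc 1 N, g i * ρn1 i
      = ∑ i ∈ Finset.Icc 1 N, g i * ρn i
        - dt / dx * ∑ i ∈ Finset.Icc 1 (N-1), (g i - g (i+1)) * F i := by
    rw [← sbp N (by omega) F g hF0 hFN, Finset.mul_sum, ← Finset.sum_sub_distrib]
    exact Finset.sum_congr rfl fun i hi => by
      simp only [Finset.mem_Icc] at hi
      rw [hupd i hi.1 hi.2]; ring
  have hA : 0 ≤ ∑ i ∈ Finset.Icc 1 N, g i * ρn i := by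
    apply Finset.sum_nonneg
    intro i hi
    simp only [Finset.mem_Icc] at hi
    apply mul_nonneg _ (hpos i hi.1 hi.2)
    simp only [hg]; positivity
  have hge : 0 ≤ ∑ i ∈ Finset.Icc 1 N, g i * ρn1 i := by
    rw [sum_eq]
    nlinarith
  intro j hj1 hj2
  by_contra hneg
  push_neg at hneg
  have hjmem : j ∈ Finset.Icc 1 N := Finset.mem_Icc.2 ⟨hj1, hj2⟩
  have hterm : ∀ i ∈ (Finset.Icc 1 N).erase j, g i * ρn1 i ≤ 0 := by
    intro i _
    by_cases h : ρn1 i < 0 <;> simp only [hg, h, if_true, if_false] <;> linarith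
  have hj : g j * ρn1 j < 0 := by
    simp only [hg, if_pos hneg, one_mul]; exact hneg
  have hsplit : g j * ρn1 j + ∑ x ∈ (Finset.Icc 1 N).erase j, g x * ρn1 x
      = ∑ x ∈ Finset.Icc 1 N, g x * ρn1 x :=
    Finset.add_sum_erase _ (fun i => g i * ρn1 i) hjmem
  have hrest := Finset.sum_nonpos hterm
  linarith [hge, hsplit]

/-- unconditional energy dissipation for the fully discrete implicit scheme
S2, for each of the three admissible choices of the convolution variable `ρ**`. -/
theorem stmt_8 (N : ℕ) (hN : 2 ≤ N) (dx dt : ℝ) (hdx : 0 < dx) (hdt : 0 < dt)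
    (H : ℝ → ℝ) (hHconv : ConvexOn ℝ Set.univ H) (hHdiff : Differentiable ℝ H)
    (V : ℕ → ℝ) (w : ℤ → ℝ) (hw : ∀ m : ℤ, w (-m) = w m)
    (K : ℕ → ℕ → ℝ) (hK : ∀ i k : ℕ, K i k = w ((i : ℤ) - (k : ℤ)))
    (ρn ρn1 ρss ξ u F : ℕ → ℝ)
    (hξ : ∀ i, 1 ≤ i → i ≤ N →
      ξ i = deriv H (ρn1 i) + V i + dx * ∑ k ∈ Finset.Icc 1 N, K i k * ρss k)
    (hu : ∀ i, 1 ≤ i → i ≤ N - 1 → u i = -(ξ (i + 1) - ξ i) / dx)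
    (hF : ∀ i, 1 ≤ i → i ≤ N - 1 →
      F i = ρn1 i * pospart (u i) + ρn1 (i + 1) * negpart (u i))
    (hF0 : F 0 = 0) (hFN : F N = 0)
    (hupd : ∀ i, 1 ≤ i → i ≤ N → ρn1 i = ρn i - dt / dx * (F i - F (i - 1)))
    (hpos : ∀ i, 1 ≤ i → i ≤ N → 0 ≤ ρn i)
    (hcase :
      (∀ i, 1 ≤ i → i ≤ N → ρss i = (ρn i + ρn1 i) / 2) ∨
      ((∀ i, 1 ≤ i → i ≤ N → ρss i = ρn i) ∧ NegDefKer N K) ∨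
      ((∀ i, 1 ≤ i → i ≤ N → ρss i = ρn1 i) ∧ PosDefKer N K)) :
    Edisc N dx H V K ρn1 ≤ Edisc N dx H V K ρn := by
  have hN1 : (1:ℕ) ≤ N := by omega
  have hlam0 : 0 < dt / dx := div_pos hdt hdx
  have hpos1 : ∀ i, 1 ≤ i → i ≤ N → 0 ≤ ρn1 i :=
    positivity_step N hN dx dt hdx hdt u F ρn ρn1 hF hF0 hFN hupd hpos
  have hKs : ∀ i k : ℕ, K i k = K k i := by
    intro i k
    rw [hK, hK, show ((i:ℤ) - k) = -((k:ℤ) - i) by ring, hw]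
  set I := Finset.Icc 1 N with hI
  set δ : ℕ → ℝ := fun i => ρn1 i - ρn i with hδ
  have hδF : ∀ i ∈ I, δ i = -(dt / dx * (F i - F (i-1))) := by
    intro i hi
    simp only [hI, Finset.mem_Icc] at hi
    simp only [hδ]
    rw [hupd i hi.1 hi.2]; ring
  -- Step B : ∑ δ ξ ≤ 0
  have hstepB : ∑ i ∈ I, δ i * ξ i ≤ 0 := by
    have e1 : ∑ i ∈ I, δ i * ξ i
        = -(dt / dx * ∑ i ∈ I, ξ i * (F i - F (i-1))) := by
      rw [Finset.mul_sum, ← Finset.sum_neg_distrib]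
      exact Finset.sum_congr rfl fun i hi => by rw [hδF i hi]; ring
    rw [e1, hI, sbp N hN1 F ξ hF0 hFN]
    have hnn : 0 ≤ ∑ i ∈ Finset.Icc 1 (N-1), (ξ i - ξ (i+1)) * F i := by
      apply Finset.sum_nonneg
      intro i hi
      simp only [Finset.mem_Icc] at hi
      have hui := hu i hi.1 hi.2
      have hxi : ξ i - ξ (i+1) = dx * u i := by
        rw [hui]; field_simp; ring
      rw [hxi, hF i hi.1 hi.2]
      have h1 : 0 ≤ ρn1 i := hpos1 i hi.1 (by omega)
      have h2 : 0 ≤ ρn1 (i+1) := hpos1 (i+1) (by omega) (by omega)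
      have hup : u i * pospart (u i) = pospart (u i) ^ 2 := by
        unfold pospart
        rcases le_total (u i) 0 with h | h
        · rw [max_eq_right h]; ring
        · rw [max_eq_left h]; ring
      have hun : u i * negpart (u i) = negpart (u i) ^ 2 := by
        unfold negpart
        rcases le_total (u i) 0 with h | h
        · rw [min_eq_left h]; ring
        · rw [min_eq_right h]; ring
      calc (0:ℝ) ≤ dx * (ρn1 i * pospart (u i) ^ 2 + ρn1 (i+1) * negpart (u i) ^ 2) := by
            have t1 := mul_nonneg h1 (sq_nonneg (pospart (u i)))
            have t2 := mul_nonneg h2 (sq_nonneg (negpart (u i)))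
            exact mul_nonneg hdx.le (by linarith)
        _ = dx * u i * (ρn1 i * pospart (u i) + ρn1 (i+1) * negpart (u i)) := by
            rw [← hup, ← hun]; ring
    nlinarith
  -- kernel swap identity
  have hswap : ∑ i ∈ I, ∑ k ∈ I, K i k * (ρn i * ρn1 k - ρn1 i * ρn k) = 0 := by
    have heq : ∑ i ∈ I, ∑ k ∈ I, K i k * (ρn i * ρn1 k - ρn1 i * ρn k)
        = -∑ i ∈ I, ∑ k ∈ I, K i k * (ρn i * ρn1 k - ρn1 i * ρn k) := by
      conv_lhs => rw [Finset.sum_comm]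
      rw [← Finset.sum_neg_distrib]
      apply Finset.sum_congr rfl
      intro k _
      rw [← Finset.sum_neg_distrib]
      apply Finset.sum_congr rfl
      intro i _
      rw [hKs i k]; ring
    linarith
  -- quadratic difference identity
  have hQ : (∑ i ∈ I, ∑ k ∈ I, K i k * ρn1 i * ρn1 k)
      - (∑ i ∈ I, ∑ k ∈ I, K i k * ρn i * ρn k)
      = ∑ i ∈ I, ∑ k ∈ I, K i k * δ i * (ρn1 k + ρn k) := by
    have expand : ∑ i ∈ I, ∑ k ∈ I, K i k * δ i * (ρn1 k + ρn k)
        = ∑ i ∈ I, ∑ k ∈ I,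
            (K i k * ρn1 i * ρn1 k - K i k * ρn i * ρn k
              - K i k * (ρn i * ρn1 k - ρn1 i * ρn k)) := by
      apply Finset.sum_congr rfl
      intro i _
      apply Finset.sum_congr rfl
      intro k _
      simp only [hδ]; ring
    rw [expand]
    simp only [Finset.sum_sub_distrib]
    rw [hswap]
    ring
  -- the ξ decomposition
  have hξsum : ∑ i ∈ I, δ i * ξ i
      = (∑ i ∈ I, δ i * deriv H (ρn1 i)) + (∑ i ∈ I, δ i * V i)
        + dx * ∑ i ∈ I, ∑ k ∈ I, K i k * δ i * ρss k := by
    have e : ∑ i ∈ I, δ i * ξ i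
        = ∑ i ∈ I, (δ i * deriv H (ρn1 i) + δ i * V i
            + ∑ k ∈ I, dx * (K i k * δ i * ρss k)) := by
      apply Finset.sum_congr rfl
      intro i hi
      simp only [hI, Finset.mem_Icc] at hi
      rw [hξ i hi.1 hi.2]
      simp only [mul_add, Finset.mul_sum]
      congr 1
      exact Finset.sum_congr rfl fun k _ => by ring
    rw [e]
    simp only [Finset.sum_add_distrib]
    congr 1
    simp only [Finset.mul_sum]
  -- the case-dependent kernel inequality
  have hkey : dx / 2 * (∑ i ∈ I, ∑ k ∈ I, K i k * δ i * (ρn1 k + ρn k))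
      ≤ dx * ∑ i ∈ I, ∑ k ∈ I, K i k * δ i * ρss k := by
    rcases hcase with hc | ⟨hc, hnd⟩ | ⟨hc, hpd⟩
    · apply le_of_eq
      have e : ∑ i ∈ I, ∑ k ∈ I, K i k * δ i * ρss k
          = ∑ i ∈ I, ∑ k ∈ I, K i k * δ i * (ρn1 k + ρn k) / 2 := by
        apply Finset.sum_congr rfl
        intro i _
        apply Finset.sum_congr rfl
        intro k hk
        simp only [hI, Finset.mem_Icc] at hk
        rw [hc k hk.1 hk.2]; ring
      rw [e]
      rw [show (∑ i ∈ I, ∑ k ∈ I, K i k * δ i * (ρn1 k + ρn k) / 2)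
          = (∑ i ∈ I, ∑ k ∈ I, K i k * δ i * (ρn1 k + ρn k)) / 2 by
        simp only [← Finset.sum_div]]
      ring
    · have hCC : ∑ i ∈ I, ∑ k ∈ I, K i k * δ i * δ k ≤ 0 := by
        have := hnd ρn1 ρn hpos1 hpos
        simpa only [hδ, hI] using this
      have e : ∑ i ∈ I, ∑ k ∈ I, K i k * δ i * ρss k
          = ∑ i ∈ I, ∑ k ∈ I, K i k * δ i * ρn k := by
        apply Finset.sum_congr rfl; intro i _
        apply Finset.sum_congr rfl; intro k hk
        simp only [hI, Finset.mem_Icc] at hk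
        rw [hc k hk.1 hk.2]
      have split : ∑ i ∈ I, ∑ k ∈ I, K i k * δ i * (ρn1 k + ρn k)
          = (∑ i ∈ I, ∑ k ∈ I, K i k * δ i * δ k)
            + 2 * ∑ i ∈ I, ∑ k ∈ I, K i k * δ i * ρn k := by
        rw [Finset.mul_sum, ← Finset.sum_add_distrib]
        apply Finset.sum_congr rfl; intro i _
        rw [Finset.mul_sum, ← Finset.sum_add_distrib]
        apply Finset.sum_congr rfl; intro k _
        simp only [hδ]; ring
      rw [e, split]
      nlinarith
    · have hCC : 0 ≤ ∑ i ∈ I, ∑ k ∈ I, K i k * δ i * δ k := by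
        have := hpd ρn1 ρn hpos1 hpos
        simpa only [hδ, hI] using this
      have e : ∑ i ∈ I, ∑ k ∈ I, K i k * δ i * ρss k
          = ∑ i ∈ I, ∑ k ∈ I, K i k * δ i * ρn1 k := by
        apply Finset.sum_congr rfl; intro i _
        apply Finset.sum_congr rfl; intro k hk
        simp only [hI, Finset.mem_Icc] at hk
        rw [hc k hk.1 hk.2]
      have split : ∑ i ∈ I, ∑ k ∈ I, K i k * δ i * (ρn1 k + ρn k)
          = (2 * ∑ i ∈ I, ∑ k ∈ I, K i k * δ i * ρn1 k)
            - ∑ i ∈ I, ∑ k ∈ I, K i k * δ i * δ k := by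
        rw [Finset.mul_sum, ← Finset.sum_sub_distrib]
        apply Finset.sum_congr rfl; intro i _
        rw [Finset.mul_sum, ← Finset.sum_sub_distrib]
        apply Finset.sum_congr rfl; intro k _
        simp only [hδ]; ring
      rw [e, split]
      nlinarith
  -- convexity
  have hHsum : (∑ i ∈ I, H (ρn1 i)) - (∑ i ∈ I, H (ρn i))
      ≤ ∑ i ∈ I, δ i * deriv H (ρn1 i) := by
    rw [← Finset.sum_sub_distrib]
    apply Finset.sum_le_sum
    intro i _
    have := tangent_aux H hHconv hHdiff (ρn1 i) (ρn i)
    simp only [hδ]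
    linarith
  have hVsum : (∑ i ∈ I, V i * ρn1 i) - (∑ i ∈ I, V i * ρn i)
      = ∑ i ∈ I, δ i * V i := by
    rw [← Finset.sum_sub_distrib]
    exact Finset.sum_congr rfl fun i _ => by simp only [hδ]; ring
  -- final assembly
  unfold Edisc
  rw [← hI]
  apply mul_le_mul_of_nonneg_left _ hdx.le
  have hQ2 : dx / 2 * (∑ i ∈ I, ∑ k ∈ I, K i k * ρn1 i * ρn1 k)
      - dx / 2 * (∑ i ∈ I, ∑ k ∈ I, K i k * ρn i * ρn k)
      = dx / 2 * ∑ i ∈ I, ∑ k ∈ I, K i k * δ i * (ρn1 k + ρn k) := by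
    rw [← mul_sub, hQ]
  linarith [hξsum, hstepB, hkey, hHsum, hVsum, hQ2]
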